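/- Let n be a natural number with n ≥ 3 and let g, h be real numbers with 1/3 < h, h < g, g < 1/2, and g > (n² − n) · (1 − 2h). Consider the flow index type ι = Fin 2 ⊕ Fin n ⊕ Fin (n−1) with bandwidths b assigning h to the type-A flows (Fin 2), g/n to the type-B flows (Fin n), and g/(n−1) to the type-C flows (Fin (n−1)), and let r₀ : ι → Fin 2 be the assignment placing the first type-A flow and all type-C flows on edge 0, and the second type-A flow and all type-B flows on edge 1. Then: (a) r₀ is feasible (each edge load is h + g ≤ 1); (b) for every edge e, the extension of r₀ by a new flow of bandwidth 1 − 2h placed on e is not feasible; and (c) every assignment r' : ι → Fin 2 differing from r₀ at exactly one index is not feasible, i.e., r₀ admits no feasibility-preserving single-flow reroute. -/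

import Mathlib

open Finset

/-- The load on edge `e`: the sum of the bandwidths of the flows assigned to `e`. -/
noncomputable def load {ι : Type*} [Fintype ι] {m : ℕ} (b : ι → ℝ) (r : ι → Fin m)
    (e : Fin m) : ℝ :=
  ∑ i ∈ univ.filter (fun i => r i = e), b i

/-- An assignment is feasible if the load of every edge is at most the capacity 1. -/
def Feasible {ι : Type*} [Fintype ι] {m : ℕ} (b : ι → ℝ) (r : ι → Fin m) : Prop :=
  ∀ e, load b r e ≤ 1

lemma load_eq_sum_ite {ι : Type*} [Fintype ι] {m : ℕ} (b : ι → ℝ) (r : ι → Fin m)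
    (e : Fin m) : load b r e = ∑ i, if r i = e then b i else 0 := by
  rw [load, sum_filter]

lemma load_update {ι : Type*} [Fintype ι] [DecidableEq ι] {m : ℕ} (b : ι → ℝ)
    (r r' : ι → Fin m) (i₀ : ι) (hagree : ∀ j, j ≠ i₀ → r' j = r j)
    (hne : r' i₀ ≠ r i₀) :
    load b r' (r' i₀) = load b r (r' i₀) + b i₀ := by
  have hset : univ.filter (fun i => r' i = r' i₀)
      = insert i₀ (univ.filter (fun i => r i = r' i₀)) := by
    ext i
    simp only [mem_filter, mem_univ, true_and, mem_insert]
    constructor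
    · intro hi
      by_cases h : i = i₀
      · exact Or.inl h
      · exact Or.inr (by rw [← hagree i h]; exact hi)
    · rintro (rfl | hi)
      · rfl
      · by_cases h : i = i₀
        · subst h; exact absurd hi.symm hne
        · rw [hagree i h]; exact hi
  have hnotmem : i₀ ∉ univ.filter (fun i => r i = r' i₀) := by
    simp only [mem_filter, mem_univ, true_and]
    exact fun hh => hne hh.symm
  rw [load, load, hset, sum_insert hnotmem, add_comm]

theorem stmt16 (n : ℕ) (hn : 3 ≤ n) (g h : ℝ)
    (hh : 1/3 < h) (hhg : h < g) (hg : g < 1/2)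
    (hgn : g > ((n : ℝ)^2 - n) * (1 - 2*h))
    (b : Fin 2 ⊕ Fin n ⊕ Fin (n - 1) → ℝ)
    (hb : b = Sum.elim (fun _ : Fin 2 => h)
      (Sum.elim (fun _ : Fin n => g / (n : ℝ)) (fun _ : Fin (n - 1) => g / ((n : ℝ) - 1))))
    (r₀ : Fin 2 ⊕ Fin n ⊕ Fin (n - 1) → Fin 2)
    (hr₀ : r₀ = Sum.elim (fun a : Fin 2 => if a = 0 then (0 : Fin 2) else 1)
      (Sum.elim (fun _ : Fin n => (1 : Fin 2)) (fun _ : Fin (n - 1) => (0 : Fin 2)))) :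
    -- (a) `r₀` is feasible: each edge load is `h + g ≤ 1`
    (Feasible b r₀ ∧ ∀ e : Fin 2, load b r₀ e = h + g) ∧
    -- (b) placing a new flow of bandwidth `1 - 2h` on either edge is infeasible
    (∀ e : Fin 2,
      ¬ Feasible (Sum.elim b (fun _ : Fin 1 => 1 - 2*h)) (Sum.elim r₀ (fun _ : Fin 1 => e))) ∧
    -- (c) `r₀` admits no feasibility-preserving single-flow reroute
    (∀ r' : Fin 2 ⊕ Fin n ⊕ Fin (n - 1) → Fin 2, (∃! i, r' i ≠ r₀ i) →
      ¬ Feasible b r') := by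
  have hn0 : (0:ℝ) < n := by positivity
  have hn3 : (3:ℝ) ≤ (n:ℝ) := by exact_mod_cast hn
  have hcast : ((n - 1 : ℕ) : ℝ) = (n:ℝ) - 1 := by
    have : 1 ≤ n := by omega
    push_cast [this]; ring
  have hn1 : (0:ℝ) < (n:ℝ) - 1 := by linarith
  have key : ∀ e : Fin 2, load b r₀ e = h + g := by
    intro e
    rw [load_eq_sum_ite, hb, hr₀, Fintype.sum_sum_type, Fintype.sum_sum_type]
    fin_cases e
    · simp only [Sum.elim_inl, Sum.elim_inr]
      rw [Fin.sum_univ_two]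
      norm_num
      rw [hcast]
      field_simp
    · simp only [Sum.elim_inl, Sum.elim_inr]
      rw [Fin.sum_univ_two]
      norm_num
      field_simp
  have hfeas : Feasible b r₀ := by
    intro e; rw [key e]; linarith
  refine ⟨⟨hfeas, key⟩, ?_, ?_⟩
  · -- part (b)
    intro e hF
    have hload : load (Sum.elim b (fun _ : Fin 1 => 1 - 2*h))
        (Sum.elim r₀ (fun _ : Fin 1 => e)) e = (h + g) + (1 - 2*h) := by
      rw [load_eq_sum_ite, Fintype.sum_sum_type]
      simp only [Sum.elim_inl, Sum.elim_inr]
      rw [← key e, load_eq_sum_ite]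
      simp
      congr
    have := hF e
    rw [hload] at this
    linarith
  · -- part (c)
    rintro r' ⟨i₀, hi₀, huniq⟩ hF
    have hagree : ∀ j, j ≠ i₀ → r' j = r₀ j := by
      intro j hj
      by_contra hc
      exact hj (huniq j hc)
    have hload := load_update b r₀ r' i₀ hagree hi₀
    have hb' : b i₀ > 1 - h - g := by
      rw [hb]
      rcases i₀ with a | i | i
      · simp only [Sum.elim_inl]; linarith
      · simp only [Sum.elim_inr, Sum.elim_inl]
        rw [gt_iff_lt, lt_div_iff₀ hn0]
        nlinarith [mul_nonneg (mul_nonneg hn0.le (by linarith : (0:ℝ) ≤ (n:ℝ) - 2)) (by linarith : (0:ℝ) ≤ 1 - 2*h)]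
      · simp only [Sum.elim_inr]
        rw [gt_iff_lt, lt_div_iff₀ hn1]
        nlinarith [mul_nonneg (mul_nonneg hn1.le (by linarith : (0:ℝ) ≤ (n:ℝ) - 1)) (by linarith : (0:ℝ) ≤ 1 - 2*h)]
    have := hF (r' i₀)
    rw [hload, key (r' i₀)] at this
    linarith
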